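/- Let u be a strict pin word and let w be a word of SP ∪ M. If |u| ≥ 2, then u ≼ w if and only if φ(u) is a factor of φ(w). If |u| = 1, then u ≼ w if and only if φ(w) has a factor in φ(u). -/

import Mathlib

namespace PinStmt

abbrev Point : Type := ℝ × ℝ

inductive Letter : Type
  | n1 | n2 | n3 | n4 | U | D | L | R
deriving DecidableEq

def Letter.isNum : Letter → Bool
  | .n1 | .n2 | .n3 | .n4 => true
  | _ => false

/-- `c` is one of the numeral letters 1,2,3,4. -/
def Letter.IsNumeral (c : Letter) : Prop := c.isNum = true

/-- `c` is one of the direction letters U,D,L,R. -/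
def Letter.IsDirection (c : Letter) : Prop := c.isNum = false

/-- `q i` lies strictly above all of `q 0, …, q (i-1)`. -/
def AboveAll (q : ℕ → Point) (i : ℕ) : Prop := ∀ j < i, (q j).2 < (q i).2
def BelowAll (q : ℕ → Point) (i : ℕ) : Prop := ∀ j < i, (q i).2 < (q j).2
def RightAll (q : ℕ → Point) (i : ℕ) : Prop := ∀ j < i, (q j).1 < (q i).1
def LeftAll  (q : ℕ → Point) (i : ℕ) : Prop := ∀ j < i, (q i).1 < (q j).1

/-- The vertical line through `q i` strictly separates `q (i-1)` from `{q j | j < i-1}`. -/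
def VLineSep (q : ℕ → Point) (i : ℕ) : Prop :=
  ((q (i - 1)).1 < (q i).1 ∧ ∀ j < i - 1, (q i).1 < (q j).1) ∨
  ((q i).1 < (q (i - 1)).1 ∧ ∀ j < i - 1, (q j).1 < (q i).1)

/-- The horizontal line through `q i` strictly separates `q (i-1)` from `{q j | j < i-1}`. -/
def HLineSep (q : ℕ → Point) (i : ℕ) : Prop :=
  ((q (i - 1)).2 < (q i).2 ∧ ∀ j < i - 1, (q i).2 < (q j).2) ∨
  ((q i).2 < (q (i - 1)).2 ∧ ∀ j < i - 1, (q j).2 < (q i).2)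

/-- Separation condition for the pin `q i`. -/
def SepCond (q : ℕ → Point) (i : ℕ) : Prop := VLineSep q i ∨ HLineSep q i

/-- Independence condition: neither line through `q i` splits `{q j | j < i}` in two
nonempty parts. -/
def IndepCond (q : ℕ → Point) (i : ℕ) : Prop :=
  ¬((∃ j < i, (q j).1 < (q i).1) ∧ (∃ j < i, (q i).1 < (q j).1)) ∧
  ¬((∃ j < i, (q j).2 < (q i).2) ∧ (∃ j < i, (q i).2 < (q j).2))

/-- `q i` lies outside the bounding box of `{q j | j < i}`. -/
def OutsideBox (q : ℕ → Point) (i : ℕ) : Prop :=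
  RightAll q i ∨ LeftAll q i ∨ AboveAll q i ∨ BelowAll q i

/-- `(q 0, …, q (m-1))` is a pin sequence. -/
def IsPinSeq (q : ℕ → Point) (m : ℕ) : Prop :=
  (∀ i < m, ∀ j < m, i ≠ j → (q i).1 ≠ (q j).1 ∧ (q i).2 ≠ (q j).2) ∧
  (∀ i, 1 ≤ i → i < m → OutsideBox q i ∧ (SepCond q i ∨ IndepCond q i))

/-- `(p 0, …, p (n-1))` is a pin representation of `σ`, where `f` sends the time index of a
pin to the position (index) of the corresponding point in the diagram of `σ`. -/
def IsPinReprWith {n : ℕ} (σ : Equiv.Perm (Fin n)) (p : ℕ → Point)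
    (f : Fin n ≃ Fin n) : Prop :=
  IsPinSeq p n ∧ ∀ j k : Fin n,
    ((p j.val).1 < (p k.val).1 ↔ f j < f k) ∧
    ((p j.val).2 < (p k.val).2 ↔ σ (f j) < σ (f k))

def IsPinRepr {n : ℕ} (σ : Equiv.Perm (Fin n)) (p : ℕ → Point) : Prop :=
  ∃ f, IsPinReprWith σ p f

/-- `σ` is a pin-permutation. -/
def IsPinPerm {n : ℕ} (σ : Equiv.Perm (Fin n)) : Prop := ∃ p, IsPinRepr σ p

/-- Prepend the origin `p0` to the sequence of pins `p`. -/
def withOrigin (p0 : Point) (p : ℕ → Point) : ℕ → Point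
  | 0 => p0
  | i + 1 => p i

/-- The letter encoding the pin `q i` (where `q 0` is the origin). -/
def LetterIs (q : ℕ → Point) (i : ℕ) : Letter → Prop
  | .U => 2 ≤ i ∧ SepCond q i ∧ AboveAll q i
  | .D => 2 ≤ i ∧ SepCond q i ∧ BelowAll q i
  | .L => 2 ≤ i ∧ SepCond q i ∧ LeftAll q i
  | .R => 2 ≤ i ∧ SepCond q i ∧ RightAll q i
  | .n1 => IndepCond q i ∧ RightAll q i ∧ AboveAll q i
  | .n2 => IndepCond q i ∧ LeftAll q i ∧ AboveAll q i
  | .n3 => IndepCond q i ∧ LeftAll q i ∧ BelowAll q i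
  | .n4 => IndepCond q i ∧ RightAll q i ∧ BelowAll q i

/-- `w` is the pin word associated with the pin sequence `(q 0, q 1, …, q n)`,
whose origin is `q 0`. -/
def WordOf (q : ℕ → Point) (n : ℕ) (w : List Letter) : Prop :=
  w.length = n ∧ ∀ i < n, LetterIs q (i + 1) (w.getD i Letter.U)

/-- `P(σ)`: the set of pin words of the permutation `σ`. -/
def PinWords {n : ℕ} (σ : Equiv.Perm (Fin n)) : Set (List Letter) :=
  { w | ∃ (p : ℕ → Point) (p0 : Point), IsPinRepr σ p ∧
        IsPinSeq (withOrigin p0 p) (n + 1) ∧ WordOf (withOrigin p0 p) n w }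

/-- The set of pin words associated with the fixed pin representation `p`
over all admissible origins. -/
def WordsOfRepr (n : ℕ) (p : ℕ → Point) : Set (List Letter) :=
  { w | ∃ p0 : Point, IsPinSeq (withOrigin p0 p) (n + 1) ∧ WordOf (withOrigin p0 p) n w }

/-- `(p 0, …, p (n-1))` is a proper pin sequence: every pin from the third one on
satisfies the separation condition. -/
def IsProperSeq (p : ℕ → Point) (n : ℕ) : Prop :=
  IsPinSeq p n ∧ ∀ i, 2 ≤ i → i < n → SepCond p i

/-- `σ` is a proper pin-permutation. -/
def IsProperPinPerm {n : ℕ} (σ : Equiv.Perm (Fin n)) : Prop :=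
  ∃ p, IsPinRepr σ p ∧ IsProperSeq p n

/-- A strict pin word: a numeral followed only by directions. -/
def IsStrict (w : List Letter) : Prop :=
  ∃ c cs, w = c :: cs ∧ c.IsNumeral ∧ ∀ d ∈ cs, d.IsDirection

/-- A quasi-strict pin word: two numerals followed only by directions. -/
def IsQuasiStrict (w : List Letter) : Prop :=
  ∃ c₁ c₂ cs, w = c₁ :: c₂ :: cs ∧ c₁.IsNumeral ∧ c₂.IsNumeral ∧ ∀ d ∈ cs, d.IsDirection

/-- `w` is a pin word (of some permutation). -/
def IsPinWord (w : List Letter) : Prop :=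
  ∃ (n : ℕ) (σ : Equiv.Perm (Fin n)), w ∈ PinWords σ

/-- `SP`: the set of strict pin words. -/
def SPset : Set (List Letter) := { w | IsPinWord w ∧ IsStrict w }

def phi2 : Letter → Letter → List Letter
  | .n1, .R => [.R, .U, .R]
  | .n2, .R => [.L, .U, .R]
  | .n3, .R => [.L, .D, .R]
  | .n4, .R => [.R, .D, .R]
  | .n1, .L => [.R, .U, .L]
  | .n2, .L => [.L, .U, .L]
  | .n3, .L => [.L, .D, .L]
  | .n4, .L => [.R, .D, .L]
  | .n1, .U => [.U, .R, .U]
  | .n2, .U => [.U, .L, .U]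
  | .n3, .U => [.D, .L, .U]
  | .n4, .U => [.D, .R, .U]
  | .n1, .D => [.U, .R, .D]
  | .n2, .D => [.U, .L, .D]
  | .n3, .D => [.D, .L, .D]
  | .n4, .D => [.D, .R, .D]
  | _, _ => []

def phi1 : Letter → Set (List Letter)
  | .n1 => {[.U, .R], [.R, .U]}
  | .n2 => {[.U, .L], [.L, .U]}
  | .n3 => {[.D, .L], [.L, .D]}
  | .n4 => {[.R, .D], [.D, .R]}
  | _ => ∅

def phiInv2 : Letter → Letter → Letter
  | .U, .R => .n1
  | .R, .U => .n1
  | .U, .L => .n2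
  | .L, .U => .n2
  | .D, .L => .n3
  | .L, .D => .n3
  | .R, .D => .n4
  | .D, .R => .n4
  | _, _ => .n1

/-- `φ(u)`, as a set of words: a two-element set when `u` is a single numeral,
a singleton `{φ(u)}` when `u` is a strict pin word of length at least 2, and
the identity (as a singleton) on words of `M`. -/
def phiSet : List Letter → Set (List Letter)
  | [] => {[]}
  | [c] => if c.isNum then phi1 c else {[c]}
  | c :: d :: rest => if c.isNum then {phi2 c d ++ rest} else {c :: d :: rest}

/-- The quadrant numeral `q(c,d)`. -/
def quadNum (c d : Letter) : Letter :=
  if c.isNum then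
    match phi2 c d with
    | [_, b, e] => phiInv2 b e
    | _ => Letter.n1
  else phiInv2 c d

/-- `us` is the strong numeral-led factor decomposition of `u`. -/
def IsSNLD (u : List Letter) (us : List (List Letter)) : Prop :=
  us.flatten = u ∧ ∀ v ∈ us, IsStrict v

def interleave : List (List Letter) → List (List Letter) → List Letter
  | [], _ => []
  | v :: vs, [] => v ++ interleave vs []
  | v :: vs, w :: ws => v ++ w ++ interleave vs ws

/-- The condition on the pieces `v^(i)`, `w^(i)`, `u^(i)` in the definition of `≼`. -/
def PieceCond (v wi ui : List Letter) : Prop :=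
  (∃ c cs, wi = c :: cs ∧ c.IsNumeral ∧ wi = ui) ∨
  (∃ d ds c, wi = d :: ds ∧ d.IsDirection ∧ v ≠ [] ∧ v.getLast? = some c ∧
    ui = quadNum c d :: ds)

/-- The order `u ≼ w` on pin words. -/
def PinOrder (u w : List Letter) : Prop :=
  ∃ us, IsSNLD u us ∧
    ∃ vs ws : List (List Letter), ws.length = us.length ∧ vs.length = us.length + 1 ∧
      w = interleave vs ws ∧
      ∀ i < us.length, PieceCond (vs.getD i []) (ws.getD i []) (us.getD i [])

def IsVert (c : Letter) : Prop := c = Letter.U ∨ c = Letter.D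
def IsHoriz (c : Letter) : Prop := c = Letter.L ∨ c = Letter.R

/-- `M`: words over `{U,D,L,R}` of length at least 2 with no factor in
`{UU,UD,DU,DD,LL,LR,RL,RR}`. -/
def MSet : Set (List Letter) :=
  { w | 2 ≤ w.length ∧ (∀ c ∈ w, c.IsDirection) ∧
        ∀ a c : Letter, [a, c] <:+: w →
          ¬(IsVert a ∧ IsVert c) ∧ ¬(IsHoriz a ∧ IsHoriz c) }

/-- `A*`: all words over the direction alphabet `A = {U,D,L,R}`. -/
def Astar : Set (List Letter) := { w | ∀ c ∈ w, c.IsDirection }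

/-- Concatenation of languages. -/
def LMul (X Y : Set (List Letter)) : Set (List Letter) :=
  { w | ∃ x ∈ X, ∃ y ∈ Y, w = x ++ y }

/-- The language `L(u) = A* φ(u^(1)) A* φ(u^(2)) … A* φ(u^(j)) A*`. -/
def LangOf (u : List Letter) : Set (List Letter) :=
  { m | ∃ us, IsSNLD u us ∧
      ∃ vs ws : List (List Letter), ws.length = us.length ∧ vs.length = us.length + 1 ∧
        m = interleave vs ws ∧ (∀ v ∈ vs, v ∈ Astar) ∧
        ∀ i < us.length, ws.getD i [] ∈ phiSet (us.getD i []) }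

/-- The language `L_π = ⋃_{u ∈ P(π)} L(u)`. -/
def Lperm {n : ℕ} (π : Equiv.Perm (Fin n)) : Set (List Letter) :=
  { m | ∃ u ∈ PinWords π, m ∈ LangOf u }

/-- `π ≤ σ`: the permutation `π` is a pattern of the permutation `σ`. -/
def IsPattern {k n : ℕ} (π : Equiv.Perm (Fin k)) (σ : Equiv.Perm (Fin n)) : Prop :=
  ∃ g : Fin k → Fin n, StrictMono g ∧ ∀ a b : Fin k, (π a < π b ↔ σ (g a) < σ (g b))

/-- `q i` lies in the quadrant (given by a numeral letter) of the bounding box of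
`{q j | j < m}`. -/
def InQuadOf (q : ℕ → Point) (i m : ℕ) : Letter → Prop
  | .n1 => (∀ j < m, (q j).1 < (q i).1) ∧ (∀ j < m, (q j).2 < (q i).2)
  | .n2 => (∀ j < m, (q i).1 < (q j).1) ∧ (∀ j < m, (q j).2 < (q i).2)
  | .n3 => (∀ j < m, (q i).1 < (q j).1) ∧ (∀ j < m, (q i).2 < (q j).2)
  | .n4 => (∀ j < m, (q j).1 < (q i).1) ∧ (∀ j < m, (q i).2 < (q j).2)
  | _ => False


/-- `σ = ⊕[π_0, …, π_(r-1)]` where the `k`-th child occupies positions and values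
`[b k, b (k+1))`. -/
def SumDecomp {n : ℕ} (σ : Equiv.Perm (Fin n)) (r : ℕ) (b : ℕ → ℕ) : Prop :=
  b 0 = 0 ∧ b r = n ∧ (∀ k < r, b k < b (k + 1)) ∧
  ∀ k < r, ∀ i : Fin n, b k ≤ i.val → i.val < b (k + 1) →
    b k ≤ (σ i).val ∧ (σ i).val < b (k + 1)

/-- The child of `σ` occupying positions `[lo, hi)` is ⊕-indecomposable. -/
def ChildIndecomp {n : ℕ} (σ : Equiv.Perm (Fin n)) (lo hi : ℕ) : Prop :=
  ¬ ∃ m, lo < m ∧ m < hi ∧ ∀ i : Fin n, lo ≤ i.val → i.val < m → (σ i).val < m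

/-- The pin read at time `a` belongs to the `k`-th child (`f` sends times to positions). -/
def PinInChild {n : ℕ} (b : ℕ → ℕ) (f : Fin n ≃ Fin n) (a : Fin n) (k : ℕ) : Prop :=
  b k ≤ (f a).val ∧ (f a).val < b (k + 1)

/-- The set of (times of) pins belonging to the `k`-th child. -/
def ChildPins {n : ℕ} (b : ℕ → ℕ) (f : Fin n ≃ Fin n) (k : ℕ) : Set (Fin n) :=
  { a | PinInChild b f a k }

/-- The starting times of the maximal runs of consecutive reading times in `S`. -/
def PieceStarts {n : ℕ} (S : Set (Fin n)) : Set (Fin n) :=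
  { a | a ∈ S ∧ ∀ c : Fin n, c.val + 1 = a.val → c ∉ S }

/-- `S` is read in exactly `k` pieces. -/
def ReadInPieces {n : ℕ} (S : Set (Fin n)) (k : ℕ) : Prop := (PieceStarts S).ncard = k

/-- The pins of `D` are all read before the pins of `C`. -/
def ReadBefore {n : ℕ} (D C : Set (Fin n)) : Prop := ∀ a ∈ D, ∀ c ∈ C, a < c

/-- The infinite oscillating sequence `ω = 3 1 5 2 7 4 9 6 …` (1-indexed). -/
def omegaSeq (i : ℕ) : ℕ := if i = 2 then 1 else if i % 2 = 1 then i + 2 else i - 2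

/-- `π` is a pattern of some prefix of the infinite oscillating sequence `ω`. -/
def IsOmegaPattern {k : ℕ} (π : Equiv.Perm (Fin k)) : Prop :=
  ∃ g : Fin k → ℕ, StrictMono g ∧ (∀ a, 1 ≤ g a) ∧
    ∀ a b : Fin k, (π a < π b ↔ omegaSeq (g a) < omegaSeq (g b))

/-- The interval of positions `[lo, lo+len)` is a block of `σ`. -/
def IsBlockOf {n : ℕ} (σ : Equiv.Perm (Fin n)) (lo len : ℕ) : Prop :=
  lo + len ≤ n ∧ ∃ vlo, ∀ i : Fin n,
    (lo ≤ i.val ∧ i.val < lo + len) ↔ (vlo ≤ (σ i).val ∧ (σ i).val < vlo + len)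

/-- `σ` is a simple permutation. -/
def IsSimplePerm {n : ℕ} (σ : Equiv.Perm (Fin n)) : Prop :=
  4 ≤ n ∧ ∀ lo len, IsBlockOf σ lo len → len ≤ 1 ∨ len = n

/-- `π` is the permutation whose one-line notation is the list `l`. -/
def PermMatches {k : ℕ} (π : Equiv.Perm (Fin k)) (l : List ℕ) : Prop :=
  l.length = k ∧ ∀ i : Fin k, (π i).val + 1 = l.getD i.val 0

/-- `ξ` is an increasing oscillation. -/
def IsIncrOsc {k : ℕ} (ξ : Equiv.Perm (Fin k)) : Prop :=
  PermMatches ξ [1] ∨ PermMatches ξ [2, 1] ∨ PermMatches ξ [2, 3, 1] ∨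
  PermMatches ξ [3, 1, 2] ∨ (4 ≤ k ∧ IsSimplePerm ξ ∧ IsOmegaPattern ξ)

/-- The child of `σ` occupying positions `[lo, hi)` is order-isomorphic to `ξ`. -/
def ChildIsPerm {n m : ℕ} (σ : Equiv.Perm (Fin n)) (lo hi : ℕ)
    (ξ : Equiv.Perm (Fin m)) : Prop :=
  lo + m = hi ∧ ∀ (a c : Fin m) (ia ic : Fin n), ia.val = lo + a.val → ic.val = lo + c.val →
    ((σ ia).val < (σ ic).val ↔ (ξ a).val < (ξ c).val)

/-- The child of `σ` occupying positions `[lo, hi)` is an increasing oscillation. -/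
def ChildIsIncrOsc {n : ℕ} (σ : Equiv.Perm (Fin n)) (lo hi : ℕ) : Prop :=
  ∃ (m : ℕ) (ξ : Equiv.Perm (Fin m)), IsIncrOsc ξ ∧ ChildIsPerm σ lo hi ξ

/-- `τ = ⊕[ξ, η]`. -/
def IsDSum2 {m k l : ℕ} (τ : Equiv.Perm (Fin m)) (ξ : Equiv.Perm (Fin k))
    (η : Equiv.Perm (Fin l)) : Prop :=
  m = k + l ∧ (∀ i : Fin m, i.val < k → (τ i).val < k) ∧
    ChildIsPerm τ 0 k ξ ∧ ChildIsPerm τ k m η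

/-- The origin `p0` lies in quadrant 1 of the bounding box of `{p j | j < n}`. -/
def OriginQ1 (p0 : Point) (p : ℕ → Point) (n : ℕ) : Prop :=
  ∀ j < n, (p j).1 < p0.1 ∧ (p j).2 < p0.2

/-- The origin `p0` lies in quadrant 3 of the bounding box of `{p j | j < n}`. -/
def OriginQ3 (p0 : Point) (p : ℕ → Point) (n : ℕ) : Prop :=
  ∀ j < n, p0.1 < (p j).1 ∧ p0.2 < (p j).2

/-- `P^(1)(ξ)`: pin words of `ξ` whose origin lies in quadrant 1 w.r.t. the points of `ξ`. -/
def PinWordsQ1 {n : ℕ} (ξ : Equiv.Perm (Fin n)) : Set (List Letter) :=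
  { w | ∃ (p : ℕ → Point) (p0 : Point), IsPinRepr ξ p ∧
        IsPinSeq (withOrigin p0 p) (n + 1) ∧ WordOf (withOrigin p0 p) n w ∧ OriginQ1 p0 p n }

/-- `P^(3)(ξ)`: pin words of `ξ` whose origin lies in quadrant 3 w.r.t. the points of `ξ`. -/
def PinWordsQ3 {n : ℕ} (ξ : Equiv.Perm (Fin n)) : Set (List Letter) :=
  { w | ∃ (p : ℕ → Point) (p0 : Point), IsPinRepr ξ p ∧
        IsPinSeq (withOrigin p0 p) (n + 1) ∧ WordOf (withOrigin p0 p) n w ∧ OriginQ3 p0 p n }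

/-- The shuffle product of two sequences of sets of words. -/
def ShuffleSeq : List (Set (List Letter)) → List (Set (List Letter)) → Set (List Letter)
  | [], [] => {[]}
  | X :: As, [] => { w | ∃ x ∈ X, ∃ t ∈ ShuffleSeq As [], w = x ++ t }
  | [], Y :: Bs => { w | ∃ y ∈ Y, ∃ t ∈ ShuffleSeq ([] : List (Set (List Letter))) Bs, w = y ++ t }
  | X :: As, Y :: Bs =>
      { w | (∃ x ∈ X, ∃ t ∈ ShuffleSeq As (Y :: Bs), w = x ++ t) ∨
            (∃ y ∈ Y, ∃ t ∈ ShuffleSeq (X :: As) Bs, w = y ++ t) }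
  termination_by A B => A.length + B.length

/-- The `p`-fold repetition `x^p` of the word `x`. -/
def repW (p : ℕ) (x : List Letter) : List Letter := (List.replicate p x).flatten

/-- The points of `ξ` at positions `i` and `j` form an active knight of `ξ`:
they occur (in some order) as the first two pins of some pin representation of `ξ`. -/
def ActiveKnight {k : ℕ} (ξ : Equiv.Perm (Fin k)) (i j : Fin k) : Prop :=
  ∃ (p : ℕ → Point) (f : Fin k ≃ Fin k) (h2 : 2 ≤ k),
    IsPinReprWith ξ p f ∧
    ((f ⟨0, by omega⟩ = i ∧ f ⟨1, by omega⟩ = j) ∨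
     (f ⟨0, by omega⟩ = j ∧ f ⟨1, by omega⟩ = i))

/-- The points at positions `i`, `j` are in horizontal knight position. -/
def KnightH {k : ℕ} (ξ : Equiv.Perm (Fin k)) (i j : Fin k) : Prop :=
  (i.val + 2 = j.val ∨ j.val + 2 = i.val) ∧
  ((ξ i).val + 1 = (ξ j).val ∨ (ξ j).val + 1 = (ξ i).val)

/-- The points at positions `i`, `j` are in vertical knight position. -/
def KnightV {k : ℕ} (ξ : Equiv.Perm (Fin k)) (i j : Fin k) : Prop :=
  (i.val + 1 = j.val ∨ j.val + 1 = i.val) ∧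
  ((ξ i).val + 2 = (ξ j).val ∨ (ξ j).val + 2 = (ξ i).val)

inductive KType : Type
  | H | V

def KnightOfType {k : ℕ} (t : KType) (ξ : Equiv.Perm (Fin k)) (i j : Fin k) : Prop :=
  match t with
  | .H => KnightH ξ i j
  | .V => KnightV ξ i j

/-- The increasing oscillation `ξ` has type `(x, y)`: its lower-left active knight
(the one containing the leftmost point) has knight-position type `x` and its
upper-right active knight (the one containing the rightmost point) has type `y`. -/
def HasOscType {k : ℕ} (ξ : Equiv.Perm (Fin k)) (x y : KType) : Prop :=
  ∃ i j i' j' : Fin k, ActiveKnight ξ i j ∧ ActiveKnight ξ i' j' ∧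
    i.val = 0 ∧ j'.val + 1 = k ∧ KnightOfType x ξ i j ∧ KnightOfType y ξ i' j'

/-- The permutation 21. -/
def perm21 : Equiv.Perm (Fin 2) := Equiv.swap 0 1

/-- The permutation 12. -/
def perm12 : Equiv.Perm (Fin 2) := Equiv.refl (Fin 2)

def EndsH (w : List Letter) : Prop := w.getLast? = some Letter.R ∨ w.getLast? = some Letter.L
def EndsV (w : List Letter) : Prop := w.getLast? = some Letter.U ∨ w.getLast? = some Letter.D

/-- `Q⁻`: quasi-strict pin words of 21. -/
def Qminus : Set (List Letter) := { w | w ∈ PinWords perm21 ∧ IsQuasiStrict w }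
/-- `S⁻_H`: strict pin words of 21 ending with R or L. -/
def SminusH : Set (List Letter) := { w | w ∈ PinWords perm21 ∧ IsStrict w ∧ EndsH w }
/-- `S⁻_V`: strict pin words of 21 ending with U or D. -/
def SminusV : Set (List Letter) := { w | w ∈ PinWords perm21 ∧ IsStrict w ∧ EndsV w }
/-- `Q⁺`: quasi-strict pin words of 12. -/
def Qplus : Set (List Letter) := { w | w ∈ PinWords perm12 ∧ IsQuasiStrict w }
/-- `S⁺_H`: strict pin words of 12 ending with R or L. -/
def SplusH : Set (List Letter) := { w | w ∈ PinWords perm12 ∧ IsStrict w ∧ EndsH w }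
/-- `S⁺_V`: strict pin words of 12 ending with U or D. -/
def SplusV : Set (List Letter) := { w | w ∈ PinWords perm12 ∧ IsStrict w ∧ EndsV w }

/-- `P^mix(ξ_i, ξ_j)` for `τ = ⊕[ξ_i, ξ_j]` with `|ξ_i| = s1`: pin words associated
with a pin representation of `τ` reading one of the two children in two pieces. -/
def Pmix {m : ℕ} (τ : Equiv.Perm (Fin m)) (s1 : ℕ) : Set (List Letter) :=
  { w | ∃ (p : ℕ → Point) (p0 : Point) (f : Fin m ≃ Fin m),
      IsPinReprWith τ p f ∧ IsPinSeq (withOrigin p0 p) (m + 1) ∧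
      WordOf (withOrigin p0 p) m w ∧
      (ReadInPieces { a : Fin m | (f a).val < s1 } 2 ∨
       ReadInPieces { a : Fin m | s1 ≤ (f a).val } 2) }

/-- The set of words `{13, 23, 33, 43, 1D, 4D}`. -/
def W13D : Set (List Letter) :=
  {[Letter.n1, Letter.n3], [Letter.n2, Letter.n3], [Letter.n3, Letter.n3],
   [Letter.n4, Letter.n3], [Letter.n1, Letter.D], [Letter.n4, Letter.D]}

/-- The set of words `{13, 23, 33, 43, 1L, 2L}`. -/
def W13L : Set (List Letter) :=
  {[Letter.n1, Letter.n3], [Letter.n2, Letter.n3], [Letter.n3, Letter.n3],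
   [Letter.n4, Letter.n3], [Letter.n1, Letter.L], [Letter.n2, Letter.L]}

/-- `M_2 = {UR, UL, DR, DL, RU, RD, LU, LD}`. -/
def M2Set : Set (List Letter) :=
  {[Letter.U, Letter.R], [Letter.U, Letter.L], [Letter.D, Letter.R], [Letter.D, Letter.L],
   [Letter.R, Letter.U], [Letter.R, Letter.D], [Letter.L, Letter.U], [Letter.L, Letter.D]}

/-- `E^s_π`: the words `φ(u)` for `u ∈ P(π)` strict. -/
def EsSet {n : ℕ} (π : Equiv.Perm (Fin n)) : Set (List Letter) :=
  { v | ∃ u ∈ PinWords π, IsStrict u ∧ v ∈ phiSet u }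

/-- `E^qs_π`: the words `φ(u^(2))` for `u = u^(1)u^(2) ∈ P(π)` quasi-strict. -/
def EqsSet {n : ℕ} (π : Equiv.Perm (Fin n)) : Set (List Letter) :=
  { v | ∃ u ∈ PinWords π, IsQuasiStrict u ∧ ∃ u1 u2, IsSNLD u [u1, u2] ∧ v ∈ phiSet u2 }


section AuxStatement3

/-- Vertical-direction test. -/
def isVertB : Letter → Bool
  | .U => true | .D => true | _ => false

/-- Adjacent direction letters of `w` alternate orientation. -/
def AltW (w : List Letter) : Prop :=
  ∀ s t (X Y : Letter), w = s ++ X :: Y :: t → X.isNum = false → Y.isNum = false →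
    isVertB X ≠ isVertB Y

lemma vert_cases {X : Letter} (hX : X.isNum = false) (hv : isVertB X = true) :
    X = .U ∨ X = .D := by
  cases X <;> simp_all [Letter.isNum, isVertB]

lemma horiz_cases {X : Letter} (hX : X.isNum = false) (hv : isVertB X = false) :
    X = .L ∨ X = .R := by
  cases X <;> simp_all [Letter.isNum, isVertB]

lemma getD_append_mid (s r : List Letter) (X d : Letter) :
    (s ++ X :: r).getD s.length d = X := by
  induction s with
  | nil => rfl
  | cons a s ih => simpa using ih

lemma vsep_not_adj (q : ℕ → Point) (t : ℕ) (h2 : 2 ≤ t)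
    (ha : VLineSep q t) (hb : VLineSep q (t + 1)) : False := by
  simp only [VLineSep, Nat.add_sub_cancel] at ha hb
  have h0 : 0 < t - 1 := by omega
  have h0t : 0 < t := by omega
  have htt : t - 1 < t := by omega
  rcases ha with ⟨a1, a2⟩ | ⟨b1, b2⟩ <;> rcases hb with ⟨c1, c2⟩ | ⟨d1, d2⟩
  · have := c2 (t - 1) htt; have := a2 0 h0; linarith
  · have := d2 0 h0t; have := a2 0 h0; linarith
  · have := c2 0 h0t; have := b2 0 h0; linarith
  · have := d2 (t - 1) htt; linarith

lemma hsep_not_adj (q : ℕ → Point) (t : ℕ) (h2 : 2 ≤ t)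
    (ha : HLineSep q t) (hb : HLineSep q (t + 1)) : False := by
  simp only [HLineSep, Nat.add_sub_cancel] at ha hb
  have h0 : 0 < t - 1 := by omega
  have h0t : 0 < t := by omega
  have htt : t - 1 < t := by omega
  rcases ha with ⟨a1, a2⟩ | ⟨b1, b2⟩ <;> rcases hb with ⟨c1, c2⟩ | ⟨d1, d2⟩
  · have := c2 (t - 1) htt; have := a2 0 h0; linarith
  · have := d2 0 h0t; have := a2 0 h0; linarith
  · have := c2 0 h0t; have := b2 0 h0; linarith
  · have := d2 (t - 1) htt; linarith

lemma vsep_of_vert {q : ℕ → Point} {t : ℕ} {X : Letter} (h : LetterIs q t X)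
    (hX : X = .U ∨ X = .D) : 2 ≤ t ∧ VLineSep q t := by
  have h2 : 2 ≤ t := by rcases hX with rfl | rfl <;> exact h.1
  have h0 : 0 < t - 1 := by omega
  have h0t : 0 < t := by omega
  have htt : t - 1 < t := by omega
  refine ⟨h2, ?_⟩
  rcases hX with rfl | rfl
  · rcases h.2.1 with hv | hv
    · exact hv
    · exfalso
      have ha := h.2.2
      rcases hv with ⟨h1, hr⟩ | ⟨h1, hr⟩
      · have := hr 0 h0; have := ha 0 h0t; linarith
      · have := ha (t - 1) htt; linarith
  · rcases h.2.1 with hv | hv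
    · exact hv
    · exfalso
      have ha := h.2.2
      rcases hv with ⟨h1, hr⟩ | ⟨h1, hr⟩
      · have := ha (t - 1) htt; linarith
      · have := hr 0 h0; have := ha 0 h0t; linarith

lemma hsep_of_horiz {q : ℕ → Point} {t : ℕ} {X : Letter} (h : LetterIs q t X)
    (hX : X = .L ∨ X = .R) : 2 ≤ t ∧ HLineSep q t := by
  have h2 : 2 ≤ t := by rcases hX with rfl | rfl <;> exact h.1
  have h0 : 0 < t - 1 := by omega
  have h0t : 0 < t := by omega
  have htt : t - 1 < t := by omega
  refine ⟨h2, ?_⟩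
  rcases hX with rfl | rfl
  · rcases h.2.1 with hv | hv
    · exfalso
      have ha := h.2.2
      rcases hv with ⟨h1, hr⟩ | ⟨h1, hr⟩
      · have := ha (t - 1) htt; linarith
      · have := hr 0 h0; have := ha 0 h0t; linarith
    · exact hv
  · rcases h.2.1 with hv | hv
    · exfalso
      have ha := h.2.2
      rcases hv with ⟨h1, hr⟩ | ⟨h1, hr⟩
      · have := hr 0 h0; have := ha 0 h0t; linarith
      · have := ha (t - 1) htt; linarith
    · exact hv

lemma pinword_alt {w : List Letter} (hw : IsPinWord w) : AltW w := by
  obtain ⟨n, σ, p, p0, -, -, hlen, hword⟩ := hw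
  intro s t X Y hEq hX hY
  set q := withOrigin p0 p with hq
  have hlen' : n = s.length + 2 + t.length := by
    rw [hEq] at hlen; simp at hlen; omega
  have hiX : s.length < n := by omega
  have hiY : s.length + 1 < n := by omega
  have hX' := hword s.length hiX
  rw [hEq, getD_append_mid] at hX'
  have hY' := hword (s.length + 1) hiY
  have hre : s ++ X :: Y :: t = (s ++ [X]) ++ (Y :: t) := by simp
  rw [hEq, hre, show s.length + 1 = (s ++ [X]).length by simp, getD_append_mid] at hY'
  have hYlen : LetterIs q (s.length + 1 + 1) Y := by
    have : (s ++ [X]).length = s.length + 1 := by simp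
    rwa [this] at hY'
  intro hEqv
  by_cases hv : isVertB X = true
  · have hXud := vert_cases hX hv
    have hYud := vert_cases hY (hEqv ▸ hv)
    obtain ⟨h2, hs1⟩ := vsep_of_vert hX' hXud
    obtain ⟨-, hs2⟩ := vsep_of_vert hYlen hYud
    exact vsep_not_adj q (s.length + 1) h2 hs1 hs2
  · have hv' : isVertB X = false := by simpa using hv
    have hXud := horiz_cases hX hv'
    have hYud := horiz_cases hY (hEqv ▸ hv')
    obtain ⟨h2, hs1⟩ := hsep_of_horiz hX' hXud
    obtain ⟨-, hs2⟩ := hsep_of_horiz hYlen hYud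
    exact hsep_not_adj q (s.length + 1) h2 hs1 hs2

lemma mset_alt {w : List Letter} (hw : w ∈ MSet) : AltW w := by
  obtain ⟨-, hdir, hfac⟩ := hw
  intro s t X Y hEq hX hY
  have hinf : [X, Y] <:+: w := ⟨s, t, by simp [hEq]⟩
  have h := hfac X Y hinf
  cases X <;> cases Y <;> simp_all [IsVert, IsHoriz, isVertB, Letter.isNum]

/-- First letter of `phi2 c d`. -/
def pA (c d : Letter) : Letter := (phi2 c d).getD 0 .U
/-- Second letter of `phi2 c d`. -/
def pB (c d : Letter) : Letter := (phi2 c d).getD 1 .U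

lemma LB1 {c d : Letter} (hc : c.isNum = true) (hd : d.isNum = false) :
    phi2 c d = [pA c d, pB c d, d] := by
  cases c <;> cases d <;> simp_all [Letter.isNum, phi2, pA, pB]

lemma LB2 {c d : Letter} (hc : c.isNum = true) (hd : d.isNum = false) :
    phiInv2 (pA c d) (pB c d) = c := by
  cases c <;> cases d <;> simp_all [Letter.isNum, phi2, pA, pB, phiInv2]

lemma LB3 {c d : Letter} (hc : c.isNum = true) (hd : d.isNum = false) :
    [pA c d, pB c d] ∈ phi1 c := by
  cases c <;> cases d <;> simp_all [Letter.isNum, phi2, pA, pB, phi1]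

lemma LB4 {c d : Letter} (hc : c.isNum = true) (hd : d.isNum = false) :
    (pA c d).isNum = false ∧ (pB c d).isNum = false ∧
    isVertB (pB c d) ≠ isVertB d ∧ isVertB (pA c d) ≠ isVertB (pB c d) := by
  cases c <;> cases d <;> simp_all [Letter.isNum, phi2, pA, pB, isVertB]

lemma LB5 {X Y d : Letter} (hX : X.isNum = false) (hY : Y.isNum = false)
    (hd : d.isNum = false) (a1 : isVertB X ≠ isVertB Y) (a2 : isVertB Y ≠ isVertB d) :
    phi2 (phiInv2 X Y) d = [X, Y, d] := by
  cases X <;> cases Y <;> cases d <;> simp_all [Letter.isNum, phi2, phiInv2, isVertB]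

lemma LB6 {X Y : Letter} (hX : X.isNum = false) (hY : Y.isNum = false)
    (a1 : isVertB X ≠ isVertB Y) :
    [X, Y] ∈ phi1 (phiInv2 X Y) ∧ (phiInv2 X Y).isNum = true := by
  cases X <;> cases Y <;> simp_all [Letter.isNum, phi1, phiInv2, isVertB]

lemma LB7 {pu : List Letter} {c : Letter} (h : pu ∈ phi1 c) :
    ∃ X Y, pu = [X, Y] ∧ phiInv2 X Y = c ∧ X.isNum = false ∧ Y.isNum = false ∧
      isVertB X ≠ isVertB Y ∧ c.isNum = true := by
  cases c <;>
    simp only [phi1, Set.mem_insert_iff, Set.mem_singleton_iff, Set.mem_empty_iff_false] at h <;>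
    rcases h with rfl | rfl <;>
    exact ⟨_, _, rfl, by simp [phiInv2, Letter.isNum, isVertB]⟩

lemma LQ1 {c d : Letter} (hc : c.isNum = true) (hd : d.isNum = false) :
    quadNum c d = phiInv2 (pB c d) d := by
  cases c <;> cases d <;> simp_all [Letter.isNum, quadNum, phi2, pB, phiInv2]

lemma LQ2 {c d : Letter} (hc : c.isNum = false) : quadNum c d = phiInv2 c d := by
  simp [quadNum, hc]

/-- A canonical element of `phi1 c`. -/
def can1 : Letter → List Letter
  | .n1 => [.U, .R] | .n2 => [.U, .L] | .n3 => [.D, .L] | .n4 => [.R, .D]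
  | _ => []

lemma can1_mem {c : Letter} (hc : c.isNum = true) : can1 c ∈ phi1 c := by
  cases c <;> simp_all [Letter.isNum, can1, phi1]

lemma strict_snld {u : List Letter} (hs : IsStrict u) {us : List (List Letter)}
    (h : IsSNLD u us) : us = [u] := by
  obtain ⟨c, cs, rfl, hc, hcs⟩ := hs
  obtain ⟨hflat, hall⟩ := h
  cases us with
  | nil => simp at hflat
  | cons v us' =>
    obtain ⟨c0, cs0, rfl, hc0, -⟩ := hall _ (List.mem_cons_self ..)
    cases us' with
    | nil =>
      simp only [List.flatten, List.append_nil] at hflat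
      simpa using hflat
    | cons v2 us'' =>
      obtain ⟨c2, cs2, rfl, hc2, -⟩ := hall v2 (by simp)
      exfalso
      have h1 : c0 :: (cs0 ++ ((c2 :: cs2) :: us'').flatten) = c :: cs := by
        simpa using hflat
      have hmem : c2 ∈ cs := by
        have h2 : cs0 ++ ((c2 :: cs2) :: us'').flatten = cs := (List.cons.injEq _ _ _ _ ▸ h1).2
        rw [← h2]
        simp
      have := hcs c2 hmem
      simp [Letter.IsNumeral, Letter.IsDirection] at hc2 this
      rw [hc2] at this
      simp at this

lemma pinOrder_iff {u w : List Letter} (hs : IsStrict u) :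
    PinOrder u w ↔ ∃ v1 w1 v2, w = v1 ++ w1 ++ v2 ∧ PieceCond v1 w1 u := by
  constructor
  · rintro ⟨us, hsnld, vs, ws, hws, hvs, hweq, hcond⟩
    obtain rfl := strict_snld hs hsnld
    simp only [List.length_singleton] at hws hvs
    rcases ws with _ | ⟨w1, _ | ⟨w2, ws⟩⟩ <;> simp at hws
    rcases vs with _ | ⟨v1, _ | ⟨v2, _ | ⟨v3, vs⟩⟩⟩ <;> simp at hvs
    refine ⟨v1, w1, v2, ?_, ?_⟩
    · simpa [interleave] using hweq
    · simpa using hcond 0 (by simp)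
  · rintro ⟨v1, w1, v2, rfl, hpc⟩
    refine ⟨[u], ⟨by simp, by simpa using hs⟩, [v1, v2], [w1], by simp, by simp,
      by simp [interleave], ?_⟩
    intro i hi
    simp only [List.length_singleton] at hi
    interval_cases i
    simpa using hpc

lemma phiSet_num1 {c : Letter} (hc : c.isNum = true) : phiSet [c] = phi1 c := by
  simp [phiSet, hc]

lemma phiSet_num2 {c d : Letter} {rest : List Letter} (hc : c.isNum = true) :
    phiSet (c :: d :: rest) = {phi2 c d ++ rest} := by simp [phiSet, hc]

lemma phiSet_dir {a b : Letter} {t : List Letter} (ha : a.isNum = false) :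
    phiSet (a :: b :: t) = {a :: b :: t} := by simp [phiSet, ha]

lemma not_num_mem {w : List Letter} (hdir : ∀ x ∈ w, Letter.IsDirection x) {c : Letter}
    (hc : c.isNum = true) (hmem : c ∈ w) : False := by
  have := hdir c hmem
  simp [Letter.IsDirection, hc] at this

lemma concat_getLast? (l : List Letter) (a : Letter) : (l ++ [a]).getLast? = some a := by
  rw [List.getLast?_append_cons]
  rfl

lemma getLast?_some {l : List Letter} {a : Letter} (h : l.getLast? = some a) :
    ∃ l', l = l' ++ [a] :=
  ⟨l.dropLast, (List.dropLast_append_getLast? a (Option.mem_def.mpr h)).symm⟩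

lemma case_M {c : Letter} {cs w : List Letter} (hcn : c.isNum = true)
    (hcs : ∀ d ∈ cs, d.IsDirection) (hm : w ∈ MSet) :
    (∃ v1 w1 v2, w = v1 ++ w1 ++ v2 ∧ PieceCond v1 w1 (c :: cs)) ↔
      ∃ pw ∈ phiSet w, ∃ pu ∈ phiSet (c :: cs), pu <:+: pw := by
  have halt := mset_alt hm
  obtain ⟨hlen2, hdir, -⟩ := hm
  have hphiw : phiSet w = {w} := by
    rcases w with _ | ⟨a, _ | ⟨b, t0⟩⟩
    · simp at hlen2
    · simp at hlen2
    · exact phiSet_dir (hdir a (by simp))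
  rw [hphiw]
  simp only [Set.mem_singleton_iff, exists_eq_left]
  rcases cs with _ | ⟨d, rest⟩
  · rw [phiSet_num1 hcn]
    constructor
    · rintro ⟨v1, w1, v2, hweq,
        ⟨c0, cs0, rfl, hnum, hw1u⟩ | ⟨d0, ds, e, rfl, hd0, hne, hlast, huq⟩⟩
      · exact (not_num_mem hdir hcn (by rw [hweq, hw1u]; simp)).elim
      · simp only [List.cons.injEq] at huq
        obtain ⟨hqc, hds⟩ := huq
        have hds' : ds = [] := hds.symm
        subst hds'
        obtain ⟨v1', rfl⟩ := getLast?_some hlast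
        have he : e.isNum = false := hdir e (by rw [hweq]; simp)
        have hd0' : d0.isNum = false := hd0
        have a1 : isVertB e ≠ isVertB d0 :=
          halt v1' v2 e d0 (by rw [hweq]; simp) he hd0'
        rw [hqc, LQ2 he]
        exact ⟨[e, d0], (LB6 he hd0' a1).1, v1', v2, by rw [hweq]; simp⟩
    · rintro ⟨pu, hpu, s, t, hfac⟩
      obtain ⟨X, Y, rfl, hinv, hX, hY, halt2, -⟩ := LB7 hpu
      refine ⟨s ++ [X], [Y], t, by rw [← hfac]; simp,
        Or.inr ⟨Y, [], X, rfl, hY, by simp, concat_getLast? s X, ?_⟩⟩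
      rw [LQ2 hX, hinv]
  · rw [phiSet_num2 hcn]
    have hd : d.isNum = false := hcs d (by simp)
    simp only [Set.mem_singleton_iff, exists_eq_left]
    constructor
    · rintro ⟨v1, w1, v2, hweq,
        ⟨c0, cs0, rfl, hnum, hw1u⟩ | ⟨d0, ds, e, rfl, hd0, hne, hlast, huq⟩⟩
      · exact (not_num_mem hdir hcn (by rw [hweq, hw1u]; simp)).elim
      · simp only [List.cons.injEq] at huq
        obtain ⟨hqc, hds⟩ := huq
        have hds' : ds = d :: rest := hds.symm
        subst hds'
        obtain ⟨v1', rfl⟩ := getLast?_some hlast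
        have he : e.isNum = false := hdir e (by rw [hweq]; simp)
        have hd0' : d0.isNum = false := hd0
        have a1 : isVertB e ≠ isVertB d0 :=
          halt v1' (d :: rest ++ v2) e d0 (by rw [hweq]; simp) he hd0'
        have a2 : isVertB d0 ≠ isVertB d :=
          halt (v1' ++ [e]) (rest ++ v2) d0 d (by rw [hweq]; simp) hd0' hd
        rw [hqc, LQ2 he, LB5 he hd0' hd a1 a2]
        exact ⟨v1', v2, by rw [hweq]; simp⟩
    · rintro ⟨s, t, hfac⟩
      rw [LB1 hcn hd] at hfac
      obtain ⟨hA, hB, hBd, hAB⟩ := LB4 hcn hd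
      refine ⟨s ++ [pA c d], pB c d :: d :: rest, t, by rw [← hfac]; simp,
        Or.inr ⟨pB c d, d :: rest, pA c d, rfl, hB, by simp, concat_getLast? _ _, ?_⟩⟩
      rw [LQ2 hA, LB2 hcn hd]

lemma case_SP1 {c c' : Letter} {cs : List Letter} (hcn : c.isNum = true)
    (hcs : ∀ d ∈ cs, d.IsDirection) (hc' : c'.isNum = true) :
    (∃ v1 w1 v2, [c'] = v1 ++ w1 ++ v2 ∧ PieceCond v1 w1 (c :: cs)) ↔
      ∃ pw ∈ phiSet [c'], ∃ pu ∈ phiSet (c :: cs), pu <:+: pw := by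
  rw [phiSet_num1 hc']
  constructor
  · rintro ⟨v1, w1, v2, hweq,
      ⟨c0, cs0, rfl, hnum, hw1u⟩ | ⟨d0, ds, e, rfl, hd0, hne, hlast, huq⟩⟩
    · rcases v1 with _ | ⟨a1, v1⟩
      · simp only [List.nil_append, List.cons_append, List.cons.injEq] at hweq
        obtain ⟨h1, h2⟩ := hweq
        obtain ⟨h3, h4⟩ := List.append_eq_nil_iff.mp h2.symm
        subst h3; subst h4
        simp only [List.cons.injEq] at hw1u
        obtain ⟨h5, h6⟩ := hw1u
        have h7 : cs = [] := h6.symm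
        subst h7
        refine ⟨can1 c', can1_mem hc', can1 c', ?_, List.infix_refl _⟩
        rw [phiSet_num1 hcn, ← h5, ← h1]
        exact can1_mem hc'
      · exfalso
        simp only [List.cons_append, List.cons.injEq] at hweq
        have := hweq.2
        simp at this
    · exfalso
      obtain ⟨v1', rfl⟩ := getLast?_some hlast
      have hl := congrArg List.length hweq
      simp at hl
      omega
  · rintro ⟨pw, hpw, pu, hpu, s, t, hfac⟩
    obtain ⟨A, B, rfl, hinvw, -, -, -, -⟩ := LB7 hpw
    rcases cs with _ | ⟨d, rest⟩
    · rw [phiSet_num1 hcn] at hpu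
      obtain ⟨X, Y, rfl, hinvu, -, -, -, -⟩ := LB7 hpu
      have hl := congrArg List.length hfac
      simp only [List.length_append, List.length_cons, List.length_singleton,
        List.length_nil] at hl
      have hs : s = [] := List.length_eq_zero_iff.mp (by omega)
      have ht : t = [] := List.length_eq_zero_iff.mp (by omega)
      subst hs; subst ht
      simp only [List.nil_append, List.append_nil, List.cons.injEq, and_true] at hfac
      obtain ⟨rfl, rfl⟩ := hfac
      have hcc : c = c' := by rw [← hinvu, hinvw]
      exact ⟨[], [c], [], by simp [hcc], Or.inl ⟨c, [], rfl, hcn, rfl⟩⟩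
    · rw [phiSet_num2 hcn, Set.mem_singleton_iff] at hpu
      subst hpu
      rw [LB1 hcn (hcs d (by simp))] at hfac
      have hl := congrArg List.length hfac
      simp only [List.length_append, List.length_cons, List.length_singleton,
        List.length_nil] at hl
      omega

lemma case_SP2 {c c' d₁ : Letter} {cs rest' : List Letter} (hcn : c.isNum = true)
    (hcs : ∀ d ∈ cs, d.IsDirection) (hc' : c'.isNum = true)
    (hws' : ∀ x ∈ d₁ :: rest', Letter.IsDirection x)
    (halt : AltW (c' :: d₁ :: rest')) :
    (∃ v1 w1 v2, c' :: d₁ :: rest' = v1 ++ w1 ++ v2 ∧ PieceCond v1 w1 (c :: cs)) ↔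
      ∃ pw ∈ phiSet (c' :: d₁ :: rest'), ∃ pu ∈ phiSet (c :: cs), pu <:+: pw := by
  have hd₁ : d₁.isNum = false := hws' d₁ (by simp)
  rw [phiSet_num2 hc']
  simp only [Set.mem_singleton_iff, exists_eq_left]
  obtain ⟨hA', hB', hB'd, hA'B'⟩ := LB4 hc' hd₁
  have hphiw : phi2 c' d₁ ++ rest' = pA c' d₁ :: pB c' d₁ :: d₁ :: rest' := by
    rw [LB1 hc' hd₁]; rfl
  rcases cs with _ | ⟨d, rest⟩
  · -- |u| = 1
    rw [phiSet_num1 hcn]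
    constructor
    · rintro ⟨v1, w1, v2, hweq,
        ⟨c0, cs0, rfl, hnum, hw1u⟩ | ⟨d0, ds, e, rfl, hd0, hne, hlast, huq⟩⟩
      · rw [hw1u] at hweq
        rcases v1 with _ | ⟨x, xs⟩
        · simp only [List.nil_append, List.cons_append, List.nil_append,
            List.cons.injEq] at hweq
          obtain ⟨h1, rfl⟩ := hweq
          refine ⟨[pA c' d₁, pB c' d₁], ?_, [], d₁ :: rest', by rw [hphiw]; simp⟩
          rw [← h1]
          exact LB3 hc' hd₁
        · simp only [List.cons_append, List.cons.injEq] at hweq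
          exact (not_num_mem hws' hcn (by rw [hweq.2]; simp)).elim
      · simp only [List.cons.injEq] at huq
        obtain ⟨hqc, hds⟩ := huq
        have hds' : ds = [] := hds.symm
        subst hds'
        obtain ⟨v1', rfl⟩ := getLast?_some hlast
        rcases v1' with _ | ⟨x, xs⟩
        · simp only [List.nil_append, List.singleton_append, List.cons_append,
            List.cons.injEq] at hweq
          obtain ⟨rfl, rfl, h3⟩ := hweq
          refine ⟨[pB c' d₁, d₁], ?_, [pA c' d₁], rest', by rw [hphiw, h3]; simp⟩
          rw [hqc, LQ1 hc' hd₁]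
          exact (LB6 hB' hd₁ hB'd).1
        · have hweq' : c' :: d₁ :: rest' = x :: (xs ++ e :: d0 :: v2) := by
            rw [hweq]; simp
          simp only [List.cons.injEq] at hweq'
          obtain ⟨rfl, hdirs⟩ := hweq'
          have he : e.isNum = false := hws' e (by rw [hdirs]; simp)
          have hd0' : d0.isNum = false := hd0
          have a1 : isVertB e ≠ isVertB d0 :=
            halt (c' :: xs) v2 e d0 (by rw [hweq]; simp) he hd0'
          refine ⟨[e, d0], ?_, pA c' d₁ :: pB c' d₁ :: xs, v2, by rw [hphiw, hdirs]; simp⟩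
          rw [hqc, LQ2 he]
          exact (LB6 he hd0' a1).1
    · rintro ⟨pu, hpu, s, t, hfac⟩
      obtain ⟨X, Y, rfl, hinv, hX, hY, -, -⟩ := LB7 hpu
      rw [hphiw] at hfac
      rcases s with _ | ⟨x, s'⟩
      · simp only [List.nil_append, List.cons_append, List.cons.injEq] at hfac
        obtain ⟨h1, h2, h3⟩ := hfac
        have hcc : c = c' := by rw [← hinv, h1, h2, LB2 hc' hd₁]
        exact ⟨[], [c], d₁ :: rest', by simp [hcc], Or.inl ⟨c, [], rfl, hcn, rfl⟩⟩
      rcases s' with _ | ⟨y, s''⟩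
      · simp only [List.cons_append, List.nil_append, List.cons.injEq] at hfac
        obtain ⟨h1, h2, h3, h4⟩ := hfac
        rw [h2, h3] at hinv
        refine ⟨[c'], [d₁], rest', by simp,
          Or.inr ⟨d₁, [], c', rfl, hd₁, by simp, rfl, ?_⟩⟩
        rw [LQ1 hc' hd₁, hinv]
      · simp only [List.cons_append, List.cons.injEq] at hfac
        obtain ⟨h1, h2, hdirs⟩ := hfac
        refine ⟨(c' :: s'') ++ [X], [Y], t, ?_,
          Or.inr ⟨Y, [], X, rfl, hY, by simp, concat_getLast? _ _, ?_⟩⟩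
        · rw [← hdirs]; simp
        · rw [LQ2 hX, hinv]
  · -- |u| ≥ 2
    have hd : d.isNum = false := hcs d (by simp)
    rw [phiSet_num2 hcn]
    simp only [Set.mem_singleton_iff, exists_eq_left]
    have hphiu : phi2 c d ++ rest = pA c d :: pB c d :: d :: rest := by
      rw [LB1 hcn hd]; rfl
    obtain ⟨hAu, hBu, hBud, hABu⟩ := LB4 hcn hd
    constructor
    · rintro ⟨v1, w1, v2, hweq,
        ⟨c0, cs0, rfl, hnum, hw1u⟩ | ⟨d0, ds, e, rfl, hd0, hne, hlast, huq⟩⟩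
      · rw [hw1u] at hweq
        rcases v1 with _ | ⟨x, xs⟩
        · simp only [List.nil_append, List.cons_append, List.cons.injEq] at hweq
          obtain ⟨h1, h2, hr⟩ := hweq
          exact ⟨[], v2, by rw [← h1, ← h2, hr]; simp⟩
        · simp only [List.cons_append, List.cons.injEq] at hweq
          exact (not_num_mem hws' hcn (by rw [hweq.2]; simp)).elim
      · simp only [List.cons.injEq] at huq
        obtain ⟨hqc, hds⟩ := huq
        have hds' : ds = d :: rest := hds.symm
        subst hds'
        obtain ⟨v1', rfl⟩ := getLast?_some hlast
        rcases v1' with _ | ⟨x, xs⟩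
        · simp only [List.nil_append, List.singleton_append, List.cons_append,
            List.cons.injEq] at hweq
          obtain ⟨rfl, rfl, hr⟩ := hweq
          have a2 : isVertB d₁ ≠ isVertB d :=
            halt [c'] (rest ++ v2) d₁ d (by rw [hr]; simp) hd₁ hd
          have h5 : phi2 c d = [pB c' d₁, d₁, d] := by
            rw [hqc, LQ1 hc' hd₁]; exact LB5 hB' hd₁ hd hB'd a2
          refine ⟨[pA c' d₁], v2, ?_⟩
          rw [h5, hphiw, hr]; simp
        · have hweq' : c' :: d₁ :: rest' = x :: (xs ++ e :: d0 :: d :: (rest ++ v2)) := by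
            rw [hweq]; simp
          simp only [List.cons.injEq] at hweq'
          obtain ⟨rfl, hdirs⟩ := hweq'
          have he : e.isNum = false := hws' e (by rw [hdirs]; simp)
          have hd0' : d0.isNum = false := hd0
          have a1 : isVertB e ≠ isVertB d0 :=
            halt (c' :: xs) (d :: (rest ++ v2)) e d0 (by rw [hweq]; simp) he hd0'
          have a2 : isVertB d0 ≠ isVertB d :=
            halt (c' :: xs ++ [e]) (rest ++ v2) d0 d (by rw [hweq]; simp) hd0' hd
          have h5 : phi2 c d = [e, d0, d] := by
            rw [hqc, LQ2 he]; exact LB5 he hd0' hd a1 a2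
          refine ⟨pA c' d₁ :: pB c' d₁ :: xs, v2, ?_⟩
          rw [h5, hphiw, hdirs]; simp
    · rintro ⟨s, t, hfac⟩
      rw [hphiu, hphiw] at hfac
      rcases s with _ | ⟨x, s'⟩
      · simp only [List.nil_append, List.cons_append, List.cons.injEq] at hfac
        obtain ⟨h1, h2, h3, h4⟩ := hfac
        have hcc : c = c' := by rw [← LB2 hcn hd, h1, h2, LB2 hc' hd₁]
        refine ⟨[], c :: d :: rest, t, ?_, Or.inl ⟨c, d :: rest, rfl, hcn, rfl⟩⟩
        rw [hcc, h3, ← h4]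
        simp
      rcases s' with _ | ⟨y, s''⟩
      · simp only [List.cons_append, List.nil_append, List.cons.injEq] at hfac
        obtain ⟨h1, h2, h3, h4⟩ := hfac
        refine ⟨[c'], d₁ :: d :: rest, t, ?_,
          Or.inr ⟨d₁, d :: rest, c', rfl, hd₁, by simp, rfl, ?_⟩⟩
        · rw [← h4]; simp
        · rw [LQ1 hc' hd₁, ← h2, ← h3, LB2 hcn hd]
      · simp only [List.cons_append, List.cons.injEq] at hfac
        obtain ⟨h1, h2, hdirs⟩ := hfac
        refine ⟨(c' :: s'') ++ [pA c d], pB c d :: d :: rest, t, ?_,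
          Or.inr ⟨pB c d, d :: rest, pA c d, rfl, hBu, by simp, concat_getLast? _ _, ?_⟩⟩
        · rw [← hdirs]; simp
        · rw [LQ2 hAu, LB2 hcn hd]

end AuxStatement3

/-- For a strict pin word `u` and `w ∈ SP ∪ M`: if `|u| ≥ 2` then
`u ≼ w` iff `φ(u)` is a factor of `φ(w)`; if `|u| = 1` then `u ≼ w` iff `φ(w)` has a
factor in the two-element set `φ(u)`. -/
theorem statement_3 (u : List Letter) (hu : IsPinWord u) (hstrict : IsStrict u)
    (w : List Letter) (hw : w ∈ SPset ∪ MSet) :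
    (2 ≤ u.length →
      (PinOrder u w ↔ ∃ pw ∈ phiSet w, ∃ pu ∈ phiSet u, pu <:+: pw)) ∧
    (u.length = 1 →
      (PinOrder u w ↔ ∃ pw ∈ phiSet w, ∃ pu ∈ phiSet u, pu <:+: pw)) := by
  have key : PinOrder u w ↔ ∃ pw ∈ phiSet w, ∃ pu ∈ phiSet u, pu <:+: pw := by
    rw [pinOrder_iff hstrict]
    obtain ⟨c, cs, rfl, hc, hcs⟩ := hstrict
    have hcn : c.isNum = true := hc
    rcases hw with ⟨hpinw, hstw⟩ | hm
    · obtain ⟨c', ws', rfl, hc', hws'⟩ := hstw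
      have hc'n : c'.isNum = true := hc'
      rcases ws' with _ | ⟨d₁, rest'⟩
      · exact case_SP1 hcn hcs hc'n
      · exact case_SP2 hcn hcs hc'n hws' (pinword_alt hpinw)
    · exact case_M hcn hcs hm
  exact ⟨fun _ => key, fun _ => key⟩

end PinStmt
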